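/- Let p be a prime. Then the Davenport constant of the cyclic group ℤ/pℤ equals p; that is, every multiset over ZMod p of cardinality p contains a nonempty submultiset whose sum is zero, there exists a zero-sum-free multiset of cardinality p−1, and moreover every zero-sum-free multiset over ZMod p of cardinality p−1 consists of a single nonzero element u repeated p−1 times. -/

import Mathlib

open Multiset Finset

private def subsums {p : ℕ} (S : Multiset (ZMod p)) : Finset (ZMod p) :=
  (S.powerset.toFinset.filter (· ≠ 0)).image Multiset.sum

private lemma mem_subsums {p : ℕ} {S : Multiset (ZMod p)} {x : ZMod p} :
    x ∈ subsums S ↔ ∃ T : Multiset (ZMod p), T ≤ S ∧ T ≠ 0 ∧ T.sum = x := by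
  simp only [subsums, Finset.mem_image, Finset.mem_filter, Multiset.mem_toFinset,
    Multiset.mem_powerset]
  constructor
  · rintro ⟨T, ⟨h1, h2⟩, h3⟩; exact ⟨T, h1, h2, h3⟩
  · rintro ⟨T, h1, h2, h3⟩; exact ⟨T, ⟨h1, h2⟩, h3⟩

private lemma step_lemma {p : ℕ} (hp : p.Prime) {a : ZMod p} {S : Multiset (ZMod p)}
    (h : ∀ T : Multiset (ZMod p), T ≤ a ::ₘ S → T ≠ 0 → T.sum ≠ 0) :
    (subsums S).card + 1 ≤ (subsums (a ::ₘ S)).card := by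
  have hsub : subsums S ⊆ subsums (a ::ₘ S) := by
    intro x hx
    rw [mem_subsums] at hx ⊢
    obtain ⟨T, h1, h2, h3⟩ := hx
    exact ⟨T, le_trans h1 (Multiset.le_cons_self _ _), h2, h3⟩
  by_contra hc
  push_neg at hc
  have heq : subsums (a ::ₘ S) = subsums S :=
    (Finset.eq_of_subset_of_card_le hsub (by omega)).symm
  have ha : a ∈ subsums S := by
    rw [← heq, mem_subsums]
    exact ⟨{a}, by simp [Multiset.singleton_le], by simp, by simp⟩
  have hadd : ∀ x ∈ subsums S, a + x ∈ subsums S := by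
    intro x hx
    rw [mem_subsums] at hx
    obtain ⟨T, h1, h2, h3⟩ := hx
    rw [← heq, mem_subsums]
    exact ⟨a ::ₘ T, Multiset.cons_le_cons a h1, by simp, by simp [h3]⟩
  have hk : ∀ k : ℕ, 1 ≤ k → (k • a : ZMod p) ∈ subsums S := by
    intro k hk1
    induction k with
    | zero => omega
    | succ n ih =>
      rcases Nat.eq_or_lt_of_le hk1 with h1 | h1
      · obtain rfl : n = 0 := by omega
        simpa using ha
      · have := hadd _ (ih (by omega))
        rwa [← succ_nsmul' a n] at this
  have h0 : (0 : ZMod p) ∈ subsums S := by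
    have := hk p hp.one_lt.le
    rwa [nsmul_eq_mul, ZMod.natCast_self, zero_mul] at this
  rw [mem_subsums] at h0
  obtain ⟨T, h1, h2, h3⟩ := h0
  exact h T (le_trans h1 (Multiset.le_cons_self _ _)) h2 h3

private lemma chain_lemma {p : ℕ} (hp : p.Prime) (U V : Multiset (ZMod p))
    (h : ∀ T : Multiset (ZMod p), T ≤ U + V → T ≠ 0 → T.sum ≠ 0) :
    (subsums V).card + Multiset.card U ≤ (subsums (U + V)).card := by
  induction U using Multiset.induction with
  | empty => simp
  | cons a U' ih =>
    have hcons : a ::ₘ U' + V = a ::ₘ (U' + V) := by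
      rw [Multiset.cons_add]
    rw [hcons] at h ⊢
    have h' : ∀ T : Multiset (ZMod p), T ≤ U' + V → T ≠ 0 → T.sum ≠ 0 := fun T hT =>
      h T (le_trans hT (Multiset.le_cons_self _ _))
    have := step_lemma hp h
    have := ih h'
    simp only [Multiset.card_cons]
    omega

private lemma subsums_card_le {p : ℕ} [NeZero p] {S : Multiset (ZMod p)}
    (h : ∀ T : Multiset (ZMod p), T ≤ S → T ≠ 0 → T.sum ≠ 0) :
    (subsums S).card ≤ p - 1 := by
  have hsub : subsums S ⊆ Finset.univ.erase 0 := by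
    intro x hx
    rw [mem_subsums] at hx
    obtain ⟨T, h1, h2, h3⟩ := hx
    exact Finset.mem_erase.2 ⟨h3 ▸ h T h1 h2, Finset.mem_univ x⟩
  calc (subsums S).card ≤ (Finset.univ.erase 0).card := Finset.card_le_card hsub
    _ = p - 1 := by rw [Finset.card_erase_of_mem (Finset.mem_univ _), Finset.card_univ,
        ZMod.card]

/-- Olson: `D(ℤ/pℤ) = p`. Every multiset over `ZMod p` of cardinality `p` has a
nonempty zero-sum submultiset, there is a zero-sum-free multiset of cardinality
`p - 1`, and every zero-sum-free multiset of cardinality `p - 1` is of the form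
`[u]^(p-1)` for a nonzero `u`. -/
theorem davenport_zmod_p (p : ℕ) (hp : p.Prime) :
    (∀ S : Multiset (ZMod p), p ≤ Multiset.card S →
      ∃ T : Multiset (ZMod p), T ≤ S ∧ T ≠ 0 ∧ T.sum = 0) ∧
    (∃ S : Multiset (ZMod p), Multiset.card S = p - 1 ∧
      ∀ T : Multiset (ZMod p), T ≤ S → T ≠ 0 → T.sum ≠ 0) ∧
    (∀ S : Multiset (ZMod p), Multiset.card S = p - 1 →
      (∀ T : Multiset (ZMod p), T ≤ S → T ≠ 0 → T.sum ≠ 0) →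
      ∃ u : ZMod p, u ≠ 0 ∧ S = Multiset.replicate (p - 1) u) := by
  haveI : Fact p.Prime := ⟨hp⟩
  refine ⟨?_, ?_, ?_⟩
  · -- part 1
    intro S hS
    by_contra hc
    push_neg at hc
    have hzsf : ∀ T : Multiset (ZMod p), T ≤ S → T ≠ 0 → T.sum ≠ 0 := by
      intro T h1 h2 h3; exact absurd h3 (hc T h1 h2)
    have h1 := chain_lemma hp S 0 (by simpa using hzsf)
    have h2 := subsums_card_le hzsf
    have h3 : (subsums (0 : Multiset (ZMod p))).card = 0 := by
      rw [Finset.card_eq_zero]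
      ext x
      simp only [mem_subsums, Finset.notMem_empty, iff_false]
      rintro ⟨T, hT, hT0, -⟩
      exact hT0 (Multiset.le_zero.1 hT)
    rw [add_zero] at h1
    have := hp.one_lt
    omega
  · -- part 2
    refine ⟨Multiset.replicate (p - 1) 1, Multiset.card_replicate _ _, ?_⟩
    intro T hT hT0
    rw [Multiset.le_replicate_iff] at hT
    obtain ⟨k, hk, rfl⟩ := hT
    rw [Multiset.sum_replicate, nsmul_eq_mul, mul_one]
    intro h0
    rw [ZMod.natCast_eq_zero_iff] at h0
    have hk1 : 1 ≤ k := by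
      rcases Nat.eq_zero_or_pos k with h | h
      · subst h; simp at hT0
      · exact h
    have := Nat.le_of_dvd hk1 h0
    have := hp.one_lt
    omega
  · -- part 3
    intro S hcard hzsf
    have hp1 : 1 ≤ p - 1 := by have := hp.one_lt; omega
    have hSne : S ≠ 0 := by
      intro h; rw [h] at hcard; simp at hcard; omega
    obtain ⟨u, hu⟩ := Multiset.exists_mem_of_ne_zero hSne
    have hune : u ≠ 0 := by
      intro h
      exact hzsf {u} (Multiset.singleton_le.2 hu) (by simp) (by simp [h])
    refine ⟨u, hune, ?_⟩
    rw [Multiset.eq_replicate]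
    refine ⟨hcard, ?_⟩
    by_contra hc
    push_neg at hc
    obtain ⟨b, hb, hbu⟩ := hc
    -- S contains u and b, distinct
    have hbne : b ≠ 0 := by
      intro h
      exact hzsf {b} (Multiset.singleton_le.2 hb) (by simp) (by simp [h])
    have hle : (u ::ₘ {b} : Multiset (ZMod p)) ≤ S := by
      have hb' : b ∈ S.erase u := by
        rw [Multiset.mem_erase_of_ne hbu]
        exact hb
      calc (u ::ₘ {b} : Multiset (ZMod p)) ≤ u ::ₘ S.erase u :=
            Multiset.cons_le_cons u (Multiset.singleton_le.2 hb')
        _ = S := Multiset.cons_erase hu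
    obtain ⟨S'', hS''⟩ := Multiset.le_iff_exists_add.1 hle
    -- card bound
    have hzsf' : ∀ T : Multiset (ZMod p), T ≤ S'' + (u ::ₘ {b}) → T ≠ 0 → T.sum ≠ 0 := by
      intro T hT
      apply hzsf
      rw [hS'', add_comm]
      exact hT
    have hchain := chain_lemma hp S'' (u ::ₘ {b}) hzsf'
    have hbase : 3 ≤ (subsums (u ::ₘ {b} : Multiset (ZMod p))).card := by
      have h1 : u ∈ subsums (u ::ₘ {b} : Multiset (ZMod p)) := by
        rw [mem_subsums]; exact ⟨{u}, by simp, by simp, by simp⟩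
      have h2 : b ∈ subsums (u ::ₘ {b} : Multiset (ZMod p)) := by
        rw [mem_subsums]; exact ⟨{b}, by simp, by simp, by simp⟩
      have h3 : u + b ∈ subsums (u ::ₘ {b} : Multiset (ZMod p)) := by
        rw [mem_subsums]; exact ⟨u ::ₘ {b}, le_refl _, by simp, by simp⟩
      have : ({u, b, u + b} : Finset (ZMod p)) ⊆ subsums (u ::ₘ {b}) := by
        intro x hx
        simp only [Finset.mem_insert, Finset.mem_singleton] at hx
        rcases hx with rfl | rfl | rfl <;> assumption
      have d1 : u ≠ b := fun h => hbu h.symm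
      have d2 : u ≠ u + b := fun h => hbne (left_eq_add.mp h)
      have d3 : b ≠ u + b := fun h => hune (right_eq_add.mp h)
      have hcard3 : ({u, b, u + b} : Finset (ZMod p)).card = 3 := by
        rw [Finset.card_insert_of_notMem (by simp [d1, d2]),
          Finset.card_insert_of_notMem (by simp [d3]), Finset.card_singleton]
      calc 3 = ({u, b, u + b} : Finset (ZMod p)).card := hcard3.symm
        _ ≤ _ := Finset.card_le_card this
    have hbound : (subsums S).card ≤ p - 1 := subsums_card_le hzsf
    have hScard : Multiset.card S'' = p - 3 := by
      have := congrArg Multiset.card hS''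
      simp at this
      omega
    rw [hS'', add_comm (u ::ₘ {b}) S''] at hbound
    have hp3 : 3 ≤ p := by
      -- S has two distinct elements so card S ≥ 2, p - 1 ≥ 2
      have : 2 ≤ Multiset.card S := by
        have := congrArg Multiset.card hS''
        simp at this
        omega
      omega
    omega
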